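/- arXiv:2008.11592 — 5 statements merged into one kernel-verified Lean document; each statement's English description precedes it below -/
import Mathlib

section
/- Let X ∈ ℝ^{n×n} be stable (spectral radius less than 1) and let Y₁, Y₂ be symmetric n×n real matrices. If XᵀY₁X − Y₁ ≤ XᵀY₂X − Y₂ in the Loewner order, then Y₁ ≥ Y₂ in the Loewner order. -/
/-- A real square matrix is stable if all of its complex eigenvalues have
absolute value strictly less than 1 (spectral radius < 1). -/
def Matrix.IsStable {n : ℕ} (X : Matrix (Fin n) (Fin n) ℝ) : Prop :=
  ∀ μ ∈ spectrum ℂ (X.map ((↑) : ℝ → ℂ)), ‖μ‖ < 1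

open Filter Topology Matrix
open scoped ENNReal NNReal

lemma euclidean_coord_le_norm {n : ℕ} (y : EuclideanSpace ℂ (Fin n)) (i : Fin n) :
    ‖y i‖ ≤ ‖y‖ := by
  rw [EuclideanSpace.norm_eq, ← Real.sqrt_sq (norm_nonneg (y i))]
  exact Real.sqrt_le_sqrt <|
    Finset.single_le_sum (f := fun i => ‖y i‖ ^ 2) (fun _ _ => sq_nonneg _) (Finset.mem_univ i)

open scoped Matrix.Norms.L2Operator in
lemma entry_norm_le_l2_opNorm {n : ℕ} (M : Matrix (Fin n) (Fin n) ℂ) (i j : Fin n) :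
    ‖M i j‖ ≤ ‖M‖ := by
  have h1 := M.l2_opNorm_mulVec (EuclideanSpace.single j (1 : ℂ))
  rw [EuclideanSpace.norm_single, norm_one, mul_one] at h1
  refine le_trans ?_ <| le_trans
    (euclidean_coord_le_norm ((EuclideanSpace.equiv (Fin n) ℂ).symm
      (M *ᵥ (EuclideanSpace.single j (1 : ℂ)))) i) h1
  apply le_of_eq
  congr 1
  show M i j = (M *ᵥ (EuclideanSpace.single j (1 : ℂ) : EuclideanSpace ℂ (Fin n))) i
  have : (EuclideanSpace.single j (1 : ℂ) : EuclideanSpace ℂ (Fin n)) =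
      (Pi.single j 1 : Fin n → ℂ) := rfl
  rw [this, Matrix.mulVec_single]
  simp

open scoped Matrix.Norms.L2Operator in
lemma l2_norm_pow_tendsto {n : ℕ} [NeZero n] (A : Matrix (Fin n) (Fin n) ℂ)
    (hA : ∀ μ ∈ spectrum ℂ A, ‖μ‖ < 1) :
    Tendsto (fun k => ‖A ^ k‖) atTop (𝓝 0) := by
  haveI : Nontrivial (Matrix (Fin n) (Fin n) ℂ) := by
    refine ⟨0, 1, fun hc => ?_⟩
    have := congrFun (congrFun hc 0) 0
    simp [Matrix.one_apply] at this
  have hρ : spectralRadius ℂ A < 1 := by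
    have := spectrum.spectralRadius_lt_of_forall_lt A (r := 1)
      (fun z hz => by simpa [← norm_toNNReal, Real.toNNReal_lt_one] using hA z hz)
    simpa using this
  obtain ⟨r, hr1, hr2⟩ := ENNReal.lt_iff_exists_nnreal_btwn.mp hρ
  have hr2' : (r : ℝ) < 1 := by
    have := ENNReal.coe_lt_coe.mp (by simpa using hr2)
    exact_mod_cast this
  have h2 : ∀ᶠ k : ℕ in atTop, (‖A ^ k‖₊ : ℝ≥0∞) ^ (1 / (k : ℝ)) < (r : ℝ≥0∞) :=
    (spectrum.pow_nnnorm_pow_one_div_tendsto_nhds_spectralRadius A).eventually_lt_const hr1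
  have key : ∀ᶠ k in atTop, ‖A ^ k‖ ≤ (r : ℝ) ^ k := by
    filter_upwards [h2, eventually_ge_atTop 1] with k hk hk1
    have hk0 : (k : ℝ) ≠ 0 := Nat.cast_ne_zero.mpr (by omega)
    have hle : (‖A ^ k‖₊ : ℝ≥0∞) ≤ (r : ℝ≥0∞) ^ (k : ℕ) := by
      calc (‖A ^ k‖₊ : ℝ≥0∞)
          = ((‖A ^ k‖₊ : ℝ≥0∞) ^ (1 / (k : ℝ))) ^ (k : ℝ) := by
            rw [← ENNReal.rpow_mul, one_div_mul_cancel hk0, ENNReal.rpow_one]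
        _ ≤ (r : ℝ≥0∞) ^ (k : ℝ) :=
            ENNReal.rpow_le_rpow hk.le (Nat.cast_nonneg k)
        _ = (r : ℝ≥0∞) ^ (k : ℕ) := ENNReal.rpow_natCast _ _
    rw [← ENNReal.coe_pow, ENNReal.coe_le_coe] at hle
    calc ‖A ^ k‖ = ((‖A ^ k‖₊ : ℝ≥0) : ℝ) := rfl
      _ ≤ ((r ^ k : ℝ≥0) : ℝ) := by exact_mod_cast hle
      _ = (r : ℝ) ^ k := by push_cast; ring
  exact squeeze_zero' (Eventually.of_forall fun _ => norm_nonneg _) key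
    (tendsto_pow_atTop_nhds_zero_of_lt_one r.coe_nonneg hr2')

open scoped Matrix.Norms.L2Operator in
lemma pow_entry_tendsto {n : ℕ} (X : Matrix (Fin n) (Fin n) ℝ) (hX : X.IsStable)
    (i j : Fin n) : Tendsto (fun k => (X ^ k) i j) atTop (𝓝 0) := by
  haveI : NeZero n := ⟨by rintro rfl; exact i.elim0⟩
  set A : Matrix (Fin n) (Fin n) ℂ := X.map ((↑) : ℝ → ℂ) with hAdef
  have hA : ∀ k, A ^ k = (X ^ k).map ((↑) : ℝ → ℂ) := by
    intro k
    have : A = (Complex.ofRealHom).mapMatrix X := rfl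
    rw [this, ← map_pow]
    rfl
  have hnorm := l2_norm_pow_tendsto A hX
  have hbound : ∀ k, ‖(X ^ k) i j‖ ≤ ‖A ^ k‖ := by
    intro k
    have h0 := entry_norm_le_l2_opNorm (A ^ k) i j
    have he : ‖(A ^ k) i j‖ = ‖(X ^ k) i j‖ := by
      rw [hA k]; exact Complex.norm_real _
    rwa [he] at h0
  rw [tendsto_zero_iff_norm_tendsto_zero]
  exact squeeze_zero' (Eventually.of_forall fun _ => norm_nonneg _)
    (Eventually.of_forall hbound) hnorm

/-- Monotonicity of the discrete Lyapunov operator: if `X` is stable and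
`XᵀY₁X − Y₁ ≤ XᵀY₂X − Y₂` in the Loewner order, then `Y₁ ≥ Y₂`. -/
theorem lyapunov_monotone {n : ℕ} (X Y₁ Y₂ : Matrix (Fin n) (Fin n) ℝ)
    (hX : X.IsStable) (hY₁ : Y₁.IsSymm) (hY₂ : Y₂.IsSymm)
    (h : ((X.transpose * Y₂ * X - Y₂) - (X.transpose * Y₁ * X - Y₁)).PosSemidef) :
    (Y₁ - Y₂).PosSemidef := by
  set Z := Y₁ - Y₂ with hZdef
  have hZsymm : Z.IsSymm := hY₁.sub hY₂
  have hZherm : Z.IsHermitian := by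
    rwa [Matrix.IsHermitian, Matrix.conjTranspose_eq_transpose_of_trivial]
  have hQ : (Z - Xᵀ * Z * X).PosSemidef := by
    convert h using 1
    rw [hZdef]
    noncomm_ring
  have hXh : Xᴴ = Xᵀ := Matrix.conjTranspose_eq_transpose_of_trivial X
  have hP : ∀ k, (Z - (Xᵀ) ^ k * Z * X ^ k).PosSemidef := by
    intro k
    induction k with
    | zero => simpa using Matrix.PosSemidef.zero
    | succ k ih =>
      have h2 := ih.conjTranspose_mul_mul_same X
      rw [hXh] at h2
      have h3 := hQ.add h2
      convert h3 using 1
      rw [pow_succ X, pow_succ' Xᵀ]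
      noncomm_ring
  refine Matrix.PosSemidef.of_dotProduct_mulVec_nonneg hZherm fun v => ?_
  rw [star_trivial]
  have hub : ∀ k, (X ^ k *ᵥ v) ⬝ᵥ (Z *ᵥ (X ^ k *ᵥ v)) ≤ v ⬝ᵥ (Z *ᵥ v) := by
    intro k
    have := (hP k).dotProduct_mulVec_nonneg v
    rw [star_trivial, Matrix.sub_mulVec, dotProduct_sub, sub_nonneg] at this
    refine le_trans (le_of_eq ?_) this
    rw [← Matrix.mulVec_mulVec, ← Matrix.mulVec_mulVec, ← Matrix.transpose_pow,
      dotProduct_mulVec _ ((X ^ k)ᵀ), Matrix.vecMul_transpose]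
  have hXp : Tendsto (fun k => X ^ k) atTop (𝓝 (0 : Matrix (Fin n) (Fin n) ℝ)) := by
    apply tendsto_pi_nhds.mpr
    intro i
    rw [tendsto_pi_nhds]
    intro j
    simpa using pow_entry_tendsto X hX i j
  have hc : Continuous fun M : Matrix (Fin n) (Fin n) ℝ =>
      (M *ᵥ v) ⬝ᵥ (Z *ᵥ (M *ᵥ v)) := by
    have hmv : Continuous fun M : Matrix (Fin n) (Fin n) ℝ => M *ᵥ v :=
      continuous_id.matrix_mulVec continuous_const
    exact hmv.dotProduct (continuous_const.matrix_mulVec hmv)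
  have hf : Tendsto (fun k => (X ^ k *ᵥ v) ⬝ᵥ (Z *ᵥ (X ^ k *ᵥ v))) atTop (𝓝 0) := by
    have := (hc.tendsto 0).comp hXp
    simpa [Function.comp_def] using this
  exact le_of_tendsto' hf hub
end

section
/- Let 𝒵 be a compact set of stable n×n real matrices (each with spectral radius less than 1). Then there exist constants a₀ > 0 and 0 < b₀ < 1 such that ‖Z^k‖₂ ≤ a₀ b₀^k for all k ∈ ℕ and all Z ∈ 𝒵. -/
/-- The operator 2-norm of a real matrix (induced by the Euclidean norm). -/
noncomputable def op2 {m n : ℕ} (M : Matrix (Fin m) (Fin n) ℝ) : ℝ :=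
  ‖LinearMap.toContinuousLinearMap (Matrix.toEuclideanLin M)‖

lemma op2_eq {n : ℕ} (M : Matrix (Fin n) (Fin n) ℝ) :
    op2 M = ‖Matrix.toEuclideanCLM (𝕜 := ℝ) M‖ := rfl

lemma op2_nonneg {m n : ℕ} (M : Matrix (Fin m) (Fin n) ℝ) : 0 ≤ op2 M := norm_nonneg _

lemma op2_mul_le {n : ℕ} (A B : Matrix (Fin n) (Fin n) ℝ) :
    op2 (A * B) ≤ op2 A * op2 B := by
  simp only [op2_eq, map_mul]
  exact norm_mul_le _ _

lemma op2_one_le {n : ℕ} : op2 (1 : Matrix (Fin n) (Fin n) ℝ) ≤ 1 := by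
  rw [op2_eq, map_one]
  exact ContinuousLinearMap.norm_id_le

lemma op2_pow_le {n : ℕ} {A : Matrix (Fin n) (Fin n) ℝ} {c : ℝ} (hA : op2 A ≤ c) (k : ℕ) :
    op2 (A ^ k) ≤ c ^ k := by
  have hc : 0 ≤ c := le_trans (op2_nonneg A) hA
  induction k with
  | zero => simpa using op2_one_le
  | succ k ih =>
    calc op2 (A ^ (k + 1)) = op2 (A ^ k * A) := by rw [pow_succ]
    _ ≤ op2 (A ^ k) * op2 A := op2_mul_le _ _
    _ ≤ c ^ k * c := mul_le_mul ih hA (op2_nonneg _) (by positivity)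
    _ = c ^ (k + 1) := (pow_succ _ _).symm

lemma op2_pow_le' {n : ℕ} (A : Matrix (Fin n) (Fin n) ℝ) (hA : op2 A ≤ 1) (k : ℕ)
    (hk : 1 ≤ k) : op2 (A ^ k) ≤ op2 A := by
  induction k with
  | zero => omega
  | succ k ih =>
    rcases Nat.lt_or_ge k 1 with h | hk1
    · have : k = 0 := by omega
      subst this
      rw [zero_add, pow_one]
    · calc op2 (A ^ (k + 1)) = op2 (A ^ k * A) := by rw [pow_succ]
      _ ≤ op2 (A ^ k) * op2 A := op2_mul_le _ _
      _ ≤ 1 * op2 A := by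
          apply mul_le_mul_of_nonneg_right _ (op2_nonneg _)
          exact le_trans (ih hk1) hA
      _ = op2 A := one_mul _

lemma op2_continuous {n : ℕ} : Continuous fun M : Matrix (Fin n) (Fin n) ℝ => op2 M := by
  have h := (LinearMap.continuous_of_finiteDimensional
    ((Matrix.toEuclideanLin.trans LinearMap.toContinuousLinearMap :
      Matrix (Fin n) (Fin n) ℝ ≃ₗ[ℝ] _)).toLinearMap).norm
  exact h

section Key

open Filter Topology

attribute [local instance] Matrix.linftyOpNormedAddCommGroup Matrix.linftyOpNormedRing
  Matrix.linftyOpNormedAlgebra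

lemma op2_pow_tendsto_zero {n : ℕ} (Z : Matrix (Fin n) (Fin n) ℝ) (hZ : Z.IsStable) :
    Tendsto (fun m : ℕ => op2 (Z ^ m)) atTop (𝓝 0) := by
  rcases Nat.eq_zero_or_pos n with hn | hn
  · subst hn
    have h0 : ∀ m : ℕ, op2 (Z ^ m) = 0 := by
      intro m
      rw [op2_eq]
      have : (Matrix.toEuclideanCLM (𝕜 := ℝ) (Z ^ m)) = 0 := Subsingleton.elim _ _
      rw [this, norm_zero]
    simp only [h0]
    exact tendsto_const_nhds
  haveI : Nonempty (Fin n) := ⟨⟨0, hn⟩⟩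
  set a : Matrix (Fin n) (Fin n) ℂ := Z.map ((↑) : ℝ → ℂ) with ha
  have hρ : spectralRadius ℂ a < 1 := by
    have := spectrum.spectralRadius_lt_of_forall_lt a (r := 1) (fun z hz => by
      have := hZ z hz
      simpa [← NNReal.coe_lt_coe] using this)
    simpa using this
  obtain ⟨r, hr1, hr2⟩ := exists_between hρ
  have hrtop : r ≠ ⊤ := (hr2.trans_le le_top).ne
  have T := spectrum.pow_nnnorm_pow_one_div_tendsto_nhds_spectralRadius a
  have hev : ∀ᶠ m : ℕ in atTop, (‖a ^ m‖₊ : ENNReal) ^ (1 / (m : ℝ)) < r :=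
    T.eventually_lt_const hr1
  set rr : ℝ := r.toReal with hrr
  have hrr1 : rr < 1 := by
    have := (ENNReal.toReal_lt_toReal hrtop ENNReal.one_ne_top).mpr hr2
    simpa using this
  have hrr0 : 0 ≤ rr := ENNReal.toReal_nonneg
  have hle : ∀ᶠ m : ℕ in atTop, ‖a ^ m‖ ≤ rr ^ m := by
    filter_upwards [hev, Filter.eventually_gt_atTop 0] with m hm hm0
    have hmne : (m : ℝ) ≠ 0 := Nat.cast_ne_zero.mpr hm0.ne'
    have h1 : ((‖a ^ m‖₊ : ENNReal) ^ (1 / (m : ℝ))) ^ (m : ℝ) ≤ r ^ (m : ℝ) :=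
      ENNReal.rpow_le_rpow hm.le (Nat.cast_nonneg m)
    rw [← ENNReal.rpow_mul, one_div, inv_mul_cancel₀ hmne, ENNReal.rpow_one] at h1
    have h2 : (‖a ^ m‖₊ : ENNReal) ≤ (r.toNNReal : ENNReal) ^ (m : ℕ) := by
      rw [← ENNReal.rpow_natCast (r.toNNReal : ENNReal) m, ENNReal.coe_toNNReal hrtop]
      exact_mod_cast h1
    have h3 : ‖a ^ m‖₊ ≤ r.toNNReal ^ m := by
      rwa [← ENNReal.coe_pow, ENNReal.coe_le_coe] at h2
    calc ‖a ^ m‖ = (‖a ^ m‖₊ : ℝ) := rfl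
    _ ≤ ((r.toNNReal ^ m : NNReal) : ℝ) := NNReal.coe_le_coe.mpr h3
    _ = rr ^ m := by rw [NNReal.coe_pow]; rfl
  have hnorm0 : Tendsto (fun m : ℕ => ‖a ^ m‖) atTop (𝓝 0) := by
    apply squeeze_zero' (Filter.Eventually.of_forall fun m => norm_nonneg _) hle
    exact tendsto_pow_atTop_nhds_zero_of_lt_one hrr0 hrr1
  let F : Matrix (Fin n) (Fin n) ℂ →ₗ[ℝ]
      (EuclideanSpace ℝ (Fin n) →L[ℝ] EuclideanSpace ℝ (Fin n)) :=
    ((Matrix.toEuclideanLin.trans LinearMap.toContinuousLinearMap :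
      Matrix (Fin n) (Fin n) ℝ ≃ₗ[ℝ] _).toLinearMap).comp Complex.reLm.mapMatrix
  let Fc := LinearMap.toContinuousLinearMap F
  have hF : ∀ m : ℕ, op2 (Z ^ m) = ‖Fc (a ^ m)‖ := by
    intro m
    have hpow : a ^ m = (Z ^ m).map ((↑) : ℝ → ℂ) := by
      rw [ha]
      exact (map_pow (RingHom.mapMatrix (algebraMap ℝ ℂ)) Z m).symm
    have h1 : Fc (a ^ m) = LinearMap.toContinuousLinearMap (Matrix.toEuclideanLin (Z ^ m)) := by
      show (Matrix.toEuclideanLin.trans LinearMap.toContinuousLinearMap)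
        ((Complex.reLm.mapMatrix : Matrix (Fin n) (Fin n) ℂ →ₗ[ℝ] _) (a ^ m)) = _
      have h2 : (Complex.reLm.mapMatrix (a ^ m) : Matrix (Fin n) (Fin n) ℝ) = Z ^ m := by
        rw [hpow]
        ext i j
        simp [LinearMap.mapMatrix_apply, Matrix.map_apply]
      rw [h2]
      rfl
    rw [h1]
    rfl
  have hfin : Tendsto (fun m : ℕ => ‖Fc (a ^ m)‖) atTop (𝓝 0) := by
    apply squeeze_zero' (Filter.Eventually.of_forall fun m => norm_nonneg _)
      (Filter.Eventually.of_forall fun m => Fc.le_opNorm (a ^ m))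
    simpa using hnorm0.const_mul (@norm _ ContinuousLinearMap.hasOpNorm Fc)
  simpa [hF] using hfin

end Key

open Filter Topology in
/-- A compact set of stable matrices admits uniform exponential decay constants. -/
theorem uniform_exponential_stability_on_compact {n : ℕ}
    (𝒵 : Set (Matrix (Fin n) (Fin n) ℝ)) (hc : IsCompact 𝒵)
    (hstab : ∀ Z ∈ 𝒵, Z.IsStable) :
    ∃ a₀ b₀ : ℝ, 0 < a₀ ∧ 0 < b₀ ∧ b₀ < 1 ∧
      ∀ Z ∈ 𝒵, ∀ k : ℕ, op2 (Z ^ k) ≤ a₀ * b₀ ^ k := by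
  rcases Set.eq_empty_or_nonempty 𝒵 with hne | hne
  · exact ⟨1, 1/2, one_pos, by norm_num, by norm_num, by simp [hne]⟩
  -- uniform bound on op2 over 𝒵
  obtain ⟨z₀, hz₀, hmax⟩ := hc.exists_isMaxOn hne op2_continuous.continuousOn
  set C : ℝ := max 1 (op2 z₀) with hC
  have hC1 : 1 ≤ C := le_max_left _ _
  have hCop : ∀ Z ∈ 𝒵, op2 Z ≤ C := fun Z hZ => le_trans (hmax hZ) (le_max_right _ _)
  -- open cover by sets where some power has small norm
  set U : ℕ → Set (Matrix (Fin n) (Fin n) ℝ) :=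
    fun m => {W | op2 (W ^ (m + 1)) < 1/2} with hU
  have hUopen : ∀ m, IsOpen (U m) := by
    intro m
    have : Continuous fun W : Matrix (Fin n) (Fin n) ℝ => op2 (W ^ (m + 1)) :=
      op2_continuous.comp (continuous_pow (m + 1))
    exact isOpen_lt this continuous_const
  have hcov : 𝒵 ⊆ ⋃ m, U m := by
    intro Z hZ
    have := op2_pow_tendsto_zero Z (hstab Z hZ)
    have hev : ∀ᶠ m : ℕ in atTop, op2 (Z ^ m) < 1/2 :=
      this.eventually_lt_const (by norm_num)
    obtain ⟨m, hm, hm1⟩ := (hev.and (Filter.eventually_ge_atTop 1)).exists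
    exact Set.mem_iUnion.mpr ⟨m - 1, by
      simp only [hU, Set.mem_setOf_eq]
      have : m - 1 + 1 = m := by omega
      rw [this]
      exact hm⟩
  obtain ⟨t, ht⟩ := hc.elim_finite_subcover U hUopen hcov
  set M : ℕ := ∏ m ∈ t, (m + 1) with hM
  have hM1 : 1 ≤ M := Nat.one_le_iff_ne_zero.mpr (by
    simp only [hM]
    exact Finset.prod_ne_zero_iff.mpr fun m _ => Nat.succ_ne_zero m)
  -- every Z in 𝒵 has op2 (Z ^ M) ≤ 1/2
  have hhalf : ∀ Z ∈ 𝒵, op2 (Z ^ M) ≤ 1/2 := by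
    intro Z hZ
    obtain ⟨m, hmt, hm⟩ : ∃ m ∈ t, op2 (Z ^ (m + 1)) < 1/2 := by
      have := ht hZ
      simp only [Set.mem_iUnion] at this
      obtain ⟨m, hmt, hm⟩ := this
      exact ⟨m, hmt, hm⟩
    have hdvd : (m + 1) ∣ M := Finset.dvd_prod_of_mem _ hmt
    obtain ⟨e, he⟩ := hdvd
    have he1 : 1 ≤ e := by
      rcases Nat.eq_zero_or_pos e with h | h
      · subst h; omega
      · exact h
    have : Z ^ M = (Z ^ (m + 1)) ^ e := by rw [← pow_mul, ← he]
    rw [this]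
    calc op2 ((Z ^ (m + 1)) ^ e) ≤ op2 (Z ^ (m + 1)) :=
      op2_pow_le' _ (le_trans hm.le (by norm_num)) e he1
    _ ≤ 1/2 := hm.le
  -- choose constants
  refine ⟨2 * C ^ M, (1/2 : ℝ) ^ ((1 : ℝ) / M), by positivity, by positivity, ?_, ?_⟩
  · apply Real.rpow_lt_one (by norm_num) (by norm_num)
    positivity
  intro Z hZ k
  set b : ℝ := (1/2 : ℝ) ^ ((1 : ℝ) / M) with hb
  have hb0 : 0 < b := by positivity
  set q : ℕ := k / M with hq
  set s : ℕ := k % M with hs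
  have hks : k = M * q + s := (Nat.div_add_mod k M).symm
  have hsM : s < M := Nat.mod_lt _ (by omega)
  have hsplit : Z ^ k = (Z ^ M) ^ q * Z ^ s := by rw [← pow_mul, ← pow_add, ← hks]
  have h1 : op2 (Z ^ k) ≤ (1/2 : ℝ) ^ q * C ^ s := by
    rw [hsplit]
    calc op2 ((Z ^ M) ^ q * Z ^ s) ≤ op2 ((Z ^ M) ^ q) * op2 (Z ^ s) := op2_mul_le _ _
    _ ≤ (1/2 : ℝ) ^ q * C ^ s := by
        apply mul_le_mul (op2_pow_le (hhalf Z hZ) q) (op2_pow_le (hCop Z hZ) s)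
          (op2_nonneg _) (by positivity)
  have h2 : C ^ s ≤ C ^ M := pow_le_pow_right₀ hC1 hsM.le
  have h3 : (1/2 : ℝ) ^ q ≤ 2 * b ^ k := by
    have hbk : b ^ k = (1/2 : ℝ) ^ ((k : ℝ) / M) := by
      rw [hb, ← Real.rpow_natCast ((1/2 : ℝ) ^ ((1 : ℝ) / M)) k, ← Real.rpow_mul (by norm_num)]
      ring_nf
    have hkM : (k : ℝ) / M ≤ (q : ℝ) + 1 := by
      rw [div_le_iff₀ (by positivity)]
      have hlt : k < M * (q + 1) := by
        rw [hks]
        have := hsM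
        nlinarith
      have hkR : (k : ℝ) < (M : ℝ) * ((q : ℝ) + 1) := by exact_mod_cast hlt
      nlinarith [hkR]
    have : (1/2 : ℝ) ^ ((q : ℝ) + 1) ≤ (1/2 : ℝ) ^ ((k : ℝ) / M) :=
      Real.rpow_le_rpow_of_exponent_ge (by norm_num) (by norm_num) hkM
    rw [Real.rpow_add (by norm_num), Real.rpow_one, Real.rpow_natCast] at this
    rw [hbk]
    nlinarith [this]
  calc op2 (Z ^ k) ≤ (1/2 : ℝ) ^ q * C ^ s := h1
  _ ≤ (2 * b ^ k) * C ^ M := by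
      apply mul_le_mul h3 h2 (by positivity) (by positivity)
  _ = 2 * C ^ M * b ^ k := by ring
end

section
/- Let A, B, S, R, K be as in the LQR setting with A − BK stable, P the unique symmetric solution of (A−BK)ᵀP(A−BK) − P + S + KᵀRK = 0, and let P* be a symmetric matrix satisfying the algebraic Riccati equation AᵀP*A − P* − AᵀP*B(R + BᵀP*B)⁻¹BᵀP*A + S = 0 with R + BᵀP*B invertible. Define K* = (R + BᵀP*B)⁻¹BᵀP*A. Then (A−BK)ᵀP*(A−BK) − P* = −S − KᵀRK + (K − K*)ᵀ(R + BᵀP*B)(K − K*). -/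
/-- Completion-of-squares reformulation of the ARE: for any gain `K` with
Lyapunov solution `P` and any ARE solution `P*` with `K* = (R+BᵀP*B)⁻¹BᵀP*A`,
`(A−BK)ᵀP*(A−BK) − P* = −S − KᵀRK + (K−K*)ᵀ(R+BᵀP*B)(K−K*)`. -/
theorem are_completion_of_squares {n m : ℕ}
    (A : Matrix (Fin n) (Fin n) ℝ) (B : Matrix (Fin n) (Fin m) ℝ)
    (S : Matrix (Fin n) (Fin n) ℝ) (R : Matrix (Fin m) (Fin m) ℝ)
    (K : Matrix (Fin m) (Fin n) ℝ) (P Pstar : Matrix (Fin n) (Fin n) ℝ)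
    (hS : S.IsSymm) (hR : R.PosDef)
    (hstab : (A - B * K).IsStable) (hP : P.IsSymm)
    (hLyap : (A - B * K).transpose * P * (A - B * K) - P + S + K.transpose * R * K = 0)
    (hPs : Pstar.IsSymm)
    (hRinv : IsUnit (R + B.transpose * Pstar * B).det)
    (hARE : A.transpose * Pstar * A - Pstar -
        A.transpose * Pstar * B * (R + B.transpose * Pstar * B)⁻¹ * B.transpose * Pstar * A
        + S = 0)
    (Kstar : Matrix (Fin m) (Fin n) ℝ)
    (hKstar : Kstar = (R + B.transpose * Pstar * B)⁻¹ * B.transpose * Pstar * A) :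
    (A - B * K).transpose * Pstar * (A - B * K) - Pstar =
      -S - K.transpose * R * K +
        (K - Kstar).transpose * (R + B.transpose * Pstar * B) * (K - Kstar) := by
  have hPsT : Pstar.transpose = Pstar := hPs
  have hRT : R.transpose = R := by
    have := hR.1.eq
    simpa [Matrix.conjTranspose_eq_transpose_of_trivial] using this
  obtain ⟨M, hM⟩ : ∃ M, M = R + B.transpose * Pstar * B := ⟨_, rfl⟩
  rw [← hM] at hRinv hARE hKstar ⊢
  have hMT : M.transpose = M := by
    simp [hM, Matrix.transpose_add, Matrix.transpose_mul, hPsT, hRT, Matrix.mul_assoc]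
  have hinv : M * M⁻¹ = 1 := Matrix.mul_nonsing_inv _ hRinv
  have hinv' : M⁻¹ * M = 1 := Matrix.nonsing_inv_mul _ hRinv
  have hKsT : Kstar.transpose = A.transpose * Pstar * B * M⁻¹ := by
    simp [hKstar, Matrix.transpose_mul, Matrix.transpose_nonsing_inv, hMT, hPsT, Matrix.mul_assoc]
  have h1 : Kstar.transpose * M = A.transpose * Pstar * B := by
    rw [hKsT, Matrix.mul_assoc, hinv', Matrix.mul_one]
  have h1' : Kstar.transpose * M * K = A.transpose * Pstar * B * K := by rw [h1]
  have h2 : M * Kstar = B.transpose * Pstar * A := by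
    rw [hKstar, ← Matrix.mul_assoc, ← Matrix.mul_assoc, ← Matrix.mul_assoc, hinv, Matrix.one_mul]
  have h2' : K.transpose * (M * Kstar) = K.transpose * (B.transpose * Pstar * A) := by rw [h2]
  have h3 : Kstar.transpose * (M * Kstar) =
      A.transpose * Pstar * B * M⁻¹ * B.transpose * Pstar * A := by
    rw [← Matrix.mul_assoc, h1, hKstar]
    simp only [Matrix.mul_assoc]
  have hARE'' : A.transpose * Pstar * A =
      A.transpose * Pstar * B * M⁻¹ * B.transpose * Pstar * A - S + Pstar := by
    linear_combination (norm := skip) hARE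
    abel
  have expand : (K - Kstar).transpose * M * (K - Kstar) =
      K.transpose * M * K - K.transpose * (M * Kstar) - Kstar.transpose * M * K
        + Kstar.transpose * (M * Kstar) := by
    simp only [Matrix.transpose_sub, Matrix.sub_mul, Matrix.mul_sub, Matrix.mul_assoc]
    abel
  have h4 : K.transpose * M * K =
      K.transpose * R * K + K.transpose * (B.transpose * Pstar * (B * K)) := by
    rw [hM]
    simp only [Matrix.add_mul, Matrix.mul_add, Matrix.mul_assoc]
  rw [expand, h3, h2', h1', h4]
  simp only [Matrix.transpose_sub, Matrix.transpose_mul, Matrix.sub_mul, Matrix.mul_sub]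
  rw [hARE'']
  simp only [Matrix.mul_assoc]
  abel
end

section
/- Exact policy improvement for LQR: let A − BK₁ be stable, P₁ the unique symmetric solution of (A−BK₁)ᵀP₁(A−BK₁) − P₁ + S + K₁ᵀRK₁ = 0 with S ≥ 0 and R > 0, and define K₂ = (R + BᵀP₁B)⁻¹BᵀP₁A. Then for every x ∈ ℝⁿ, xᵀ((A−BK₂)ᵀP₁(A−BK₂) − P₁)x ≤ −xᵀ(S + K₂ᵀRK₂)x; i.e., (A−BK₂)ᵀP₁(A−BK₂) − P₁ + S + K₂ᵀRK₂ ≤ 0 in the Loewner order. -/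
open Filter Matrix
open scoped ENNReal NNReal


section Aux

attribute [local instance] Matrix.linftyOpNormedRing Matrix.linftyOpNormedAlgebra
  Matrix.linftyOpNormedAddCommGroup

/-- If all eigenvalues of a complex matrix have norm `< 1`, then `‖Xᵏ‖ → 0`. -/
lemma aux_tendsto_norm_pow {N : ℕ} (X : Matrix (Fin N) (Fin N) ℂ)
    (h : ∀ μ ∈ spectrum ℂ X, ‖μ‖ < 1) :
    Tendsto (fun k => ‖X ^ k‖) atTop (nhds 0) := by
  rcases Nat.eq_zero_or_pos N with hN | hN
  · have hz : ∀ k : ℕ, X ^ k = 0 := fun k => by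
      subst hN; exact Subsingleton.elim _ _
    simpa [hz] using (tendsto_const_nhds : Tendsto (fun _ : ℕ => (0:ℝ)) atTop _)
  · haveI : NeZero N := ⟨hN.ne'⟩
    have hlt : spectralRadius ℂ X < 1 := by
      have := spectrum.spectralRadius_lt_of_forall_lt_of_nonempty (𝕜 := ℂ)
        (spectrum.nonempty X) (r := 1) (fun k hk => by
          simpa [← NNReal.coe_lt_coe] using h k hk)
      simpa using this
    obtain ⟨r, hr1, hr2⟩ := ENNReal.lt_iff_exists_nnreal_btwn.mp hlt
    have gel := spectrum.pow_nnnorm_pow_one_div_tendsto_nhds_spectralRadius X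
    have hev : ∀ᶠ k : ℕ in atTop, (‖X ^ k‖₊ : ℝ≥0∞) ^ (1 / (k:ℝ)) < r :=
      gel.eventually_lt_const hr1
    have hev2 : ∀ᶠ k : ℕ in atTop, ‖X ^ k‖ ≤ (r:ℝ) ^ k := by
      filter_upwards [hev, eventually_ge_atTop 1] with k hk hk1
      have hkpos : (0:ℝ) < k := by exact_mod_cast hk1
      have : ((‖X ^ k‖₊ : ℝ≥0∞) ^ (1 / (k:ℝ))) ^ (k:ℝ) ≤ (r:ℝ≥0∞) ^ (k:ℝ) :=
        ENNReal.rpow_le_rpow hk.le (le_of_lt hkpos)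
      rw [← ENNReal.rpow_mul, one_div, inv_mul_cancel₀ hkpos.ne', ENNReal.rpow_one] at this
      rw [ENNReal.rpow_natCast, ← ENNReal.coe_pow, ENNReal.coe_le_coe] at this
      exact_mod_cast this
    refine squeeze_zero' (Eventually.of_forall fun k => norm_nonneg _) hev2 ?_
    exact tendsto_pow_atTop_nhds_zero_of_lt_one r.coe_nonneg (by exact_mod_cast hr2)

/-- For a stable real matrix, each entry of `Lᵏ` tends to `0`. -/
lemma aux_tendsto_entry {N : ℕ} (L : Matrix (Fin N) (Fin N) ℝ) (h : L.IsStable)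
    (i j : Fin N) : Tendsto (fun k => (L ^ k) i j) atTop (nhds 0) := by
  set X : Matrix (Fin N) (Fin N) ℂ := L.map ((↑) : ℝ → ℂ) with hX
  have hmap : ∀ k : ℕ, X ^ k = (L ^ k).map ((↑) : ℝ → ℂ) := by
    intro k
    exact (map_pow (Complex.ofRealHom.mapMatrix) L k).symm
  have hnorm := aux_tendsto_norm_pow X h
  have hentry : ∀ k : ℕ, ‖(L ^ k) i j‖ ≤ ‖X ^ k‖ := by
    intro k
    have h1 : ‖(X ^ k) i j‖₊ ≤ ‖X ^ k‖₊ := by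
      rw [Matrix.linfty_opNNNorm_def]
      refine le_trans ?_ (Finset.le_sup (Finset.mem_univ i))
      exact Finset.single_le_sum (f := fun j' => ‖(X ^ k) i j'‖₊) (fun _ _ => zero_le) (Finset.mem_univ j)
    have h2 : ‖(X ^ k) i j‖ = ‖(L ^ k) i j‖ := by
      rw [hmap k]
      simp [Matrix.map_apply, Real.norm_eq_abs]
    rw [← h2]
    exact_mod_cast h1
  exact squeeze_zero_norm hentry hnorm

end Aux

/-- The Lyapunov solution for a stable matrix is positive semidefinite. -/
lemma aux_posSemidef {N : ℕ} (L P Q : Matrix (Fin N) (Fin N) ℝ)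
    (hstab : L.IsStable) (hPsymm : P.IsSymm) (hQ : Q.PosSemidef)
    (hLyap : P = Lᵀ * P * L + Q) : P.PosSemidef := by
  rw [Matrix.posSemidef_iff_dotProduct_mulVec]
  constructor
  · rwa [Matrix.IsHermitian, Matrix.conjTranspose_eq_transpose_of_trivial]
  intro x
  rw [star_trivial]
  -- quadratic form along trajectories
  have hstep : ∀ y : Fin N → ℝ,
      (L *ᵥ y) ⬝ᵥ P *ᵥ (L *ᵥ y) ≤ y ⬝ᵥ P *ᵥ y := by
    intro y
    have hq : y ⬝ᵥ P *ᵥ y = (L *ᵥ y) ⬝ᵥ P *ᵥ (L *ᵥ y) + y ⬝ᵥ Q *ᵥ y := by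
      conv_lhs => rw [hLyap]
      rw [Matrix.add_mulVec, dotProduct_add, ← Matrix.mulVec_mulVec,
        ← Matrix.mulVec_mulVec, Matrix.dotProduct_mulVec y Lᵀ, Matrix.vecMul_transpose]
    have hQy : 0 ≤ y ⬝ᵥ Q *ᵥ y := by simpa [star_trivial] using hQ.dotProduct_mulVec_nonneg y
    linarith [hq]
  have hiter : ∀ k : ℕ, ((L ^ k) *ᵥ x) ⬝ᵥ P *ᵥ ((L ^ k) *ᵥ x) ≤ x ⬝ᵥ P *ᵥ x := by
    intro k
    induction k with
    | zero => simp
    | succ k ih =>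
      have : (L ^ (k+1)) *ᵥ x = L *ᵥ ((L ^ k) *ᵥ x) := by
        rw [pow_succ', Matrix.mulVec_mulVec]
      rw [this]
      exact le_trans (hstep _) ih
  -- the trajectory quadratic form tends to 0
  have hx : ∀ i : Fin N, Tendsto (fun k => ((L ^ k) *ᵥ x) i) atTop (nhds 0) := by
    intro i
    have : ∀ k, ((L ^ k) *ᵥ x) i = ∑ j, (L ^ k) i j * x j := by
      intro k; simp [Matrix.mulVec, dotProduct]
    simp only [this]
    have : Tendsto (fun k => ∑ j, (L ^ k) i j * x j) atTop
        (nhds (∑ j : Fin N, 0 * x j)) :=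
      tendsto_finset_sum _ fun j _ =>
        (aux_tendsto_entry L hstab i j).mul tendsto_const_nhds
    simpa using this
  have hq0 : Tendsto (fun k => ((L ^ k) *ᵥ x) ⬝ᵥ P *ᵥ ((L ^ k) *ᵥ x)) atTop (nhds 0) := by
    have : ∀ k, ((L ^ k) *ᵥ x) ⬝ᵥ P *ᵥ ((L ^ k) *ᵥ x)
        = ∑ i, ((L ^ k) *ᵥ x) i * ∑ j, P i j * ((L ^ k) *ᵥ x) j := by
      intro k; simp [Matrix.mulVec, dotProduct]
    simp only [this]
    have h0 : Tendsto (fun k => ∑ i, ((L ^ k) *ᵥ x) i * ∑ j, P i j * ((L ^ k) *ᵥ x) j)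
        atTop (nhds (∑ i : Fin N, 0 * ∑ j : Fin N, P i j * 0)) :=
      tendsto_finset_sum _ fun i _ => (hx i).mul <|
        tendsto_finset_sum _ fun j _ => tendsto_const_nhds.mul (hx j)
    simpa using h0
  exact le_of_tendsto' hq0 hiter

/-- Exact policy improvement for LQR: with `P₁` the Lyapunov solution for a
stabilizing gain `K₁` and `K₂ = (R + BᵀP₁B)⁻¹BᵀP₁A`, one has
`(A−BK₂)ᵀP₁(A−BK₂) − P₁ + S + K₂ᵀRK₂ ≤ 0` in the Loewner order. -/
theorem exact_policy_improvement {n m : ℕ}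
    (A : Matrix (Fin n) (Fin n) ℝ) (B : Matrix (Fin n) (Fin m) ℝ)
    (S : Matrix (Fin n) (Fin n) ℝ) (R : Matrix (Fin m) (Fin m) ℝ)
    (K₁ : Matrix (Fin m) (Fin n) ℝ) (P₁ : Matrix (Fin n) (Fin n) ℝ)
    (hS : S.PosSemidef) (hR : R.PosDef)
    (hstab : (A - B * K₁).IsStable) (hP₁ : P₁.IsSymm)
    (hLyap : (A - B * K₁).transpose * P₁ * (A - B * K₁) - P₁ +
      S + K₁.transpose * R * K₁ = 0)
    (hRinv : IsUnit (R + B.transpose * P₁ * B).det)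
    (K₂ : Matrix (Fin m) (Fin n) ℝ)
    (hK₂ : K₂ = (R + B.transpose * P₁ * B)⁻¹ * B.transpose * P₁ * A) :
    (-((A - B * K₂).transpose * P₁ * (A - B * K₂) - P₁ +
        S + K₂.transpose * R * K₂)).PosSemidef := by
  have hRs : R.IsSymm := by
    have := hR.1.eq
    rwa [Matrix.conjTranspose_eq_transpose_of_trivial] at this
  -- positive semidefiniteness of P₁
  have hQpsd : (S + K₁ᵀ * R * K₁).PosSemidef := by
    refine hS.add ?_
    have := hR.posSemidef.conjTranspose_mul_mul_same K₁
    rwa [Matrix.conjTranspose_eq_transpose_of_trivial] at this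
  have hP₁psd : P₁.PosSemidef := by
    refine aux_posSemidef (A - B * K₁) P₁ (S + K₁ᵀ * R * K₁) hstab hP₁ hQpsd ?_
    have h3 : (A - B * K₁)ᵀ * P₁ * (A - B * K₁) + (S + K₁ᵀ * R * K₁) - P₁ = 0 := by
      rw [← hLyap]; abel
    exact (sub_eq_zero.mp h3).symm
  set M := R + B.transpose * P₁ * B with hM
  have hMK₂ : M * K₂ = Bᵀ * (P₁ * A) := by
    rw [hK₂]
    simp only [Matrix.mul_assoc]
    rw [← Matrix.mul_assoc M M⁻¹, Matrix.mul_nonsing_inv _ hRinv, Matrix.one_mul]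
  have hMsymm : Mᵀ = M := by
    rw [hM]
    simp [Matrix.transpose_add, Matrix.transpose_mul, hP₁.eq, hRs.eq, Matrix.mul_assoc]
  have hK₂M : K₂ᵀ * M = Aᵀ * (P₁ * B) := by
    have := congrArg Matrix.transpose hMK₂
    simp only [Matrix.transpose_mul, hMsymm, Matrix.transpose_transpose, hP₁.eq] at this
    rw [this, Matrix.mul_assoc]
  have hMK : ∀ K' : Matrix (Fin m) (Fin n) ℝ, M * K' = R * K' + Bᵀ * (P₁ * (B * K')) := by
    intro K'
    rw [hM, Matrix.add_mul, Matrix.mul_assoc, Matrix.mul_assoc]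
  have hsq : ∀ K : Matrix (Fin m) (Fin n) ℝ,
      (A - B * K).transpose * P₁ * (A - B * K) - P₁ + S + K.transpose * R * K
      = A.transpose * (P₁ * A) - P₁ + S
        - K.transpose * (M * K₂) - K₂.transpose * (M * K) + K.transpose * (M * K) := by
    intro K
    simp only [Matrix.transpose_sub, Matrix.transpose_mul, Matrix.sub_mul, Matrix.mul_sub,
      Matrix.mul_assoc]
    rw [hMK₂, ← Matrix.mul_assoc P₁ B K, ← Matrix.mul_assoc Aᵀ (P₁ * B) K, ← hK₂M,
      Matrix.mul_assoc K₂ᵀ M K, hMK K]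
    simp only [Matrix.mul_add, Matrix.mul_assoc]
    abel
  -- the key identity
  have h0 := hLyap
  rw [hsq K₁] at h0
  have key : -((A - B * K₂).transpose * P₁ * (A - B * K₂) - P₁ +
      S + K₂.transpose * R * K₂) = (K₁ - K₂)ᵀ * M * (K₁ - K₂) := by
    rw [hsq K₂]
    have hc : A.transpose * (P₁ * A) - P₁ + S
        = K₁.transpose * (M * K₂) + K₂.transpose * (M * K₁) - K₁.transpose * (M * K₁) := by
      have h3 : (A.transpose * (P₁ * A) - P₁ + S)
          - (K₁.transpose * (M * K₂) + K₂.transpose * (M * K₁) - K₁.transpose * (M * K₁)) = 0 := by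
        rw [← h0]; abel
      exact sub_eq_zero.mp h3
    rw [hc]
    simp only [Matrix.transpose_sub, Matrix.sub_mul, Matrix.mul_sub, Matrix.mul_assoc]
    abel
  rw [key]
  have hMpsd : M.PosSemidef := by
    rw [hM]
    refine hR.posSemidef.add ?_
    have := hP₁psd.conjTranspose_mul_mul_same B
    rwa [Matrix.conjTranspose_eq_transpose_of_trivial] at this
  have := hMpsd.conjTranspose_mul_mul_same (K₁ - K₂)
  rwa [Matrix.conjTranspose_eq_transpose_of_trivial] at this
end

section
/- If S is symmetric positive definite and K₂, P₁ are as in the exact policy improvement lemma (so that (A−BK₂)ᵀP₁(A−BK₂) − P₁ ≤ −(S + K₂ᵀRK₂) < 0) with P₁ symmetric positive definite, then A − BK₂ is stable (spectral radius less than 1). -/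
open Matrix Complex

namespace StabAux

variable {n : ℕ}

lemma quad_eq (M : Matrix (Fin n) (Fin n) ℝ) (hsym : Mᵀ = M) (v : Fin n → ℂ) :
    star v ⬝ᵥ (M.map ((↑) : ℝ → ℂ)) *ᵥ v =
      (((fun i => (v i).re) ⬝ᵥ M *ᵥ (fun i => (v i).re)
        + (fun i => (v i).im) ⬝ᵥ M *ᵥ (fun i => (v i).im) : ℝ) : ℂ) := by
  have h : ∀ i j, M j i = M i j := fun i j =>
    (congrFun (congrFun hsym i) j : Mᵀ i j = M i j)
  apply Complex.ext
  · simp only [dotProduct, mulVec, map_apply, Pi.star_apply, Complex.ofReal_re]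
    rw [Complex.re_sum, ← Finset.sum_add_distrib]
    refine Finset.sum_congr rfl fun i _ => ?_
    rw [Finset.mul_sum, Complex.re_sum, Finset.mul_sum, Finset.mul_sum,
      ← Finset.sum_add_distrib]
    refine Finset.sum_congr rfl fun j _ => ?_
    simp only [Complex.mul_re, Complex.mul_im, Complex.ofReal_re, Complex.ofReal_im,
      Pi.star_apply, RCLike.star_def, Complex.conj_re, Complex.conj_im]
    ring
  · simp only [dotProduct, mulVec, map_apply, Pi.star_apply, Complex.ofReal_im]
    rw [Complex.im_sum]
    have hterm : ∀ i, (star (v i) * ∑ j, (M i j : ℂ) * v j).im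
        = ∑ j, M i j * ((v i).re * (v j).im - (v i).im * (v j).re) := by
      intro i
      rw [Finset.mul_sum, Complex.im_sum]
      refine Finset.sum_congr rfl fun j _ => ?_
      simp only [Complex.mul_re, Complex.mul_im, Complex.ofReal_re,
        Complex.ofReal_im, RCLike.star_def, Complex.conj_re, Complex.conj_im]
      ring
    rw [Finset.sum_congr rfl fun i _ => hterm i]
    have hneg : (∑ i, ∑ j, M i j * ((v i).re * (v j).im - (v i).im * (v j).re))
        = -∑ i, ∑ j, M i j * ((v i).re * (v j).im - (v i).im * (v j).re) := by
      conv_lhs => rw [Finset.sum_comm]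
      rw [← Finset.sum_neg_distrib]
      refine Finset.sum_congr rfl fun i _ => ?_
      rw [← Finset.sum_neg_distrib]
      refine Finset.sum_congr rfl fun j _ => ?_
      rw [h i j]
      ring
    linarith [hneg]

lemma quad_pos {M : Matrix (Fin n) (Fin n) ℝ} (hM : M.PosDef) (v : Fin n → ℂ)
    (hv : v ≠ 0) :
    ∃ r : ℝ, 0 < r ∧ star v ⬝ᵥ (M.map ((↑) : ℝ → ℂ)) *ᵥ v = (r : ℂ) := by
  have hsym : Mᵀ = M := hM.isHermitian
  refine ⟨_, ?_, quad_eq M hsym v⟩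
  set x : Fin n → ℝ := fun i => (v i).re with hxdef
  set y : Fin n → ℝ := fun i => (v i).im with hydef
  have hxy : x ≠ 0 ∨ y ≠ 0 := by
    by_contra hcon
    push_neg at hcon
    apply hv
    funext i
    exact Complex.ext (congrFun hcon.1 i) (congrFun hcon.2 i)
  have key : ∀ w : Fin n → ℝ, 0 ≤ w ⬝ᵥ M *ᵥ w := fun w => by simpa using hM.posSemidef.dotProduct_mulVec_nonneg w
  rcases hxy with hx | hy
  · have h1 : 0 < x ⬝ᵥ M *ᵥ x := by simpa using hM.dotProduct_mulVec_pos hx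
    have h2 := key y
    linarith
  · have h1 : 0 < y ⬝ᵥ M *ᵥ y := by simpa using hM.dotProduct_mulVec_pos hy
    have h2 := key x
    linarith

end StabAux

/-- If `S` and `P₁` are symmetric positive definite and
`(A−BK₂)ᵀP₁(A−BK₂) − P₁ ≤ −(S + K₂ᵀRK₂)` in the Loewner order, then the
improved policy `K₂` is stabilizing: `ρ(A − BK₂) < 1`. -/
theorem improved_policy_stabilizing {n m : ℕ}
    (A : Matrix (Fin n) (Fin n) ℝ) (B : Matrix (Fin n) (Fin m) ℝ)
    (S : Matrix (Fin n) (Fin n) ℝ) (R : Matrix (Fin m) (Fin m) ℝ)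
    (K₂ : Matrix (Fin m) (Fin n) ℝ) (P₁ : Matrix (Fin n) (Fin n) ℝ)
    (hS : S.PosDef) (hR : R.PosDef) (hP₁ : P₁.PosDef)
    (hLoewner : (-(S + K₂.transpose * R * K₂) -
        ((A - B * K₂).transpose * P₁ * (A - B * K₂) - P₁)).PosSemidef) :
    (A - B * K₂).IsStable := by
  intro μ hμ
  set L : Matrix (Fin n) (Fin n) ℝ := A - B * K₂ with hLdef
  set Lc : Matrix (Fin n) (Fin n) ℂ := L.map ((↑) : ℝ → ℂ) with hLcdef
  -- obtain an eigenvector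
  have hspec : spectrum ℂ (Matrix.toLinAlgEquiv' Lc) = spectrum ℂ Lc :=
    AlgEquiv.spectrum_eq Matrix.toLinAlgEquiv' Lc
  have heig : Module.End.HasEigenvalue (Matrix.toLinAlgEquiv' Lc) μ :=
    Module.End.hasEigenvalue_iff_mem_spectrum.mpr (by rwa [hspec])
  obtain ⟨v, hv⟩ := heig.exists_hasEigenvector
  have hv0 : v ≠ 0 := hv.right
  have hvec : Lc *ᵥ v = μ • v := by
    have h := hv.apply_eq_smul
    rwa [Matrix.toLinAlgEquiv'_apply] at h
  -- the Lyapunov matrix Q = P₁ - LᵀP₁L is positive definite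
  have hKRK : (K₂ᵀ * R * K₂).PosSemidef := by
    have := hR.posSemidef.conjTranspose_mul_mul_same K₂
    simpa using this
  have hSK : (S + K₂ᵀ * R * K₂).PosDef := hS.add_posSemidef hKRK
  have hQ : (P₁ - Lᵀ * P₁ * L).PosDef := by
    have h := hSK.add_posSemidef hLoewner
    have heq : S + K₂ᵀ * R * K₂ + (-(S + K₂ᵀ * R * K₂) - (Lᵀ * P₁ * L - P₁))
        = P₁ - Lᵀ * P₁ * L := by abel
    rwa [heq] at h
  -- complexified quadratic forms
  obtain ⟨p, hp, hpc⟩ := StabAux.quad_pos hP₁ v hv0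
  obtain ⟨q, hq, hqc⟩ := StabAux.quad_pos hQ v hv0
  -- rewrite the Q-form
  have hmapmul : (P₁ - Lᵀ * P₁ * L).map ((↑) : ℝ → ℂ)
      = P₁.map ((↑) : ℝ → ℂ) - Lcᴴ * P₁.map ((↑) : ℝ → ℂ) * Lc := by
    have hherm : Lcᴴ = (Lᵀ).map ((↑) : ℝ → ℂ) := by
      ext i j
      simp [hLcdef, Matrix.map_apply, Matrix.conjTranspose_apply, Complex.conj_ofReal]
    rw [hherm]
    have h1 : (P₁ - Lᵀ * P₁ * L).map (Complex.ofRealHom : ℝ → ℂ)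
        = P₁.map Complex.ofRealHom
          - (Lᵀ).map Complex.ofRealHom * P₁.map Complex.ofRealHom
            * L.map Complex.ofRealHom := by
      rw [Matrix.map_sub _ (fun a b => map_sub Complex.ofRealHom a b),
        Matrix.map_mul (f := Complex.ofRealHom), Matrix.map_mul (f := Complex.ofRealHom)]
    exact h1
  have hform : star v ⬝ᵥ ((P₁ - Lᵀ * P₁ * L).map ((↑) : ℝ → ℂ)) *ᵥ v
      = (p : ℂ) - star μ * μ * (p : ℂ) := by
    rw [hmapmul, Matrix.sub_mulVec, dotProduct_sub, hpc]
    congr 1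
    rw [← Matrix.mulVec_mulVec, ← Matrix.mulVec_mulVec, dotProduct_mulVec,
      ← star_mulVec, hvec]
    rw [star_smul, smul_dotProduct, Matrix.mulVec_smul, dotProduct_smul, hpc]
    simp [smul_eq_mul]
    ring
  rw [hqc] at hform
  -- pass to real parts
  have hmc : star μ * μ = (Complex.normSq μ : ℂ) := by
    rw [RCLike.star_def, mul_comm, Complex.mul_conj]
  rw [hmc] at hform
  have hreal : q = p - Complex.normSq μ * p := by
    have := congrArg Complex.re hform
    simpa using this
  have hnsq : Complex.normSq μ < 1 := by
    nlinarith [hp, hq, hreal]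
  have habs : ‖μ‖ ^ 2 = Complex.normSq μ := by
    rw [Complex.sq_norm]
  nlinarith [norm_nonneg μ, habs, hnsq]
end
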